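/- Closed-form expected neighbor feature: for every a ∈ ℝ and τ ∈ ℝ, the mean of the probability density p(x) = φ(x) e^{−τ|a − x|} / Z(a, τ), where Z(a, τ) = ∫ φ(x) e^{−τ|a − x|} dx, satisfies ∫_{−∞}^{∞} x · p(x) dx = τ · (erfc((τ − a)/√2) − e^{2τa} · erfc((τ + a)/√2)) / (erfc((τ − a)/√2) + e^{2τa} · erfc((τ + a)/√2)). -/

import Mathlib

open MeasureTheory

/-- The standard Gaussian density `φ(x) = (1/√(2π)) e^{-x²/2}`. -/
noncomputable def phi (x : ℝ) : ℝ :=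
  (Real.sqrt (2 * Real.pi))⁻¹ * Real.exp (-x ^ 2 / 2)

/-- The Gauss error function `erf(z) = (2/√π) ∫₀^z e^{-t²} dt`. -/
noncomputable def erf (z : ℝ) : ℝ :=
  (2 / Real.sqrt Real.pi) * ∫ t in (0 : ℝ)..z, Real.exp (-t ^ 2)

/-- The complementary error function `erfc(z) = 1 - erf(z)`. -/
noncomputable def erfc (z : ℝ) : ℝ := 1 - erf z

open Real Set Filter


lemma gauss_eq : (fun x : ℝ => Real.exp (-x ^ 2 / 2)) = fun x : ℝ => Real.exp (-(1/2) * x ^ 2) := by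
  funext x; congr 1; ring

lemma integrable_gauss : Integrable (fun x : ℝ => Real.exp (-x ^ 2 / 2)) := by
  rw [gauss_eq]; exact integrable_exp_neg_mul_sq (by norm_num)

lemma integrable_x_gauss : Integrable (fun x : ℝ => x * Real.exp (-x ^ 2 / 2)) := by
  have h := integrable_mul_exp_neg_mul_sq (b := 1/2) (by norm_num)
  have e : (fun x : ℝ => x * Real.exp (-x ^ 2 / 2)) = fun x : ℝ => x * Real.exp (-(1/2) * x ^ 2) := by
    funext x; congr 2; ring
  rw [e]; exact h

lemma integral_gauss_total : ∫ x : ℝ, Real.exp (-x ^ 2 / 2) = Real.sqrt (2 * Real.pi) := by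
  rw [gauss_eq, integral_gaussian]
  rw [show Real.pi / (1/2) = 2 * Real.pi by ring]

lemma setIntegral_Iic_add (f : ℝ → ℝ) (c d : ℝ) :
    ∫ x in Iic c, f (x + d) = ∫ x in Iic (c + d), f x := by
  have A : MeasurableEmbedding (fun x : ℝ => x + d) :=
    (Homeomorph.addRight d).measurableEmbedding
  have h := A.setIntegral_map (μ := volume) f (Iic (c + d))
  rw [map_add_right_eq_self volume d] at h
  rw [h, preimage_add_const_Iic]
  norm_num

lemma setIntegral_Ioi_add (f : ℝ → ℝ) (c d : ℝ) :
    ∫ x in Ioi c, f (x + d) = ∫ x in Ioi (c + d), f x := by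
  have A : MeasurableEmbedding (fun x : ℝ => x + d) :=
    (Homeomorph.addRight d).measurableEmbedding
  have h := A.setIntegral_map (μ := volume) f (Ioi (c + d))
  rw [map_add_right_eq_self volume d] at h
  rw [h, preimage_add_const_Ioi]
  norm_num


lemma erf_neg (z : ℝ) : erf (-z) = - erf z := by
  unfold erf
  have h := intervalIntegral.integral_comp_neg (a := (0:ℝ)) (b := z)
    (fun t => Real.exp (-t ^ 2))
  simp only [neg_sq, neg_zero] at h
  rw [intervalIntegral.integral_symm (-z) 0, ← h]; ring

lemma sqrt_two_pos : (0:ℝ) < Real.sqrt 2 := Real.sqrt_pos.mpr (by norm_num)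

lemma integral_Iic_gauss (c : ℝ) :
    ∫ x in Iic c, Real.exp (-x ^ 2 / 2)
      = Real.sqrt (2 * Real.pi) / 2 * (1 + erf (c / Real.sqrt 2)) := by
  have h0 : ∫ x in Iic (0:ℝ), Real.exp (-x ^ 2 / 2) = Real.sqrt (2 * Real.pi) / 2 := by
    have heq : ∫ x in Iic (0:ℝ), Real.exp (-x ^ 2 / 2)
        = ∫ x in Ioi (0:ℝ), Real.exp (-x ^ 2 / 2) := by
      have h := integral_comp_neg_Iic (0:ℝ) (fun x => Real.exp (-x ^ 2 / 2))
      simp only [neg_sq, neg_zero] at h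
      exact h
    have htot := intervalIntegral.integral_Iic_add_Ioi (b := (0:ℝ))
      integrable_gauss.integrableOn integrable_gauss.integrableOn
    rw [integral_gauss_total] at htot
    linarith
  have hsub := intervalIntegral.integral_Iic_sub_Iic (μ := volume)
      (a := (0:ℝ)) (b := c) (f := fun x => Real.exp (-x ^ 2 / 2))
      integrable_gauss.integrableOn integrable_gauss.integrableOn
  have hscale : ∫ x in (0:ℝ)..c, Real.exp (-x ^ 2 / 2)
      = Real.sqrt (2 * Real.pi) / 2 * erf (c / Real.sqrt 2) := by
    have h2 : (∫ x in (0:ℝ)..c, Real.exp (-x ^ 2 / 2))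
        = ∫ x in (0:ℝ)..c, (fun t => Real.exp (-t ^ 2)) (x / Real.sqrt 2) := by
      apply intervalIntegral.integral_congr
      intro x hx
      simp only
      congr 1
      rw [div_pow, Real.sq_sqrt (by norm_num : (0:ℝ) ≤ 2)]
      ring
    have h3 := intervalIntegral.integral_comp_div (a := 0) (b := c) (c := Real.sqrt 2)
      (fun t => Real.exp (-t ^ 2)) (ne_of_gt sqrt_two_pos)
    rw [h2, h3]
    unfold erf
    rw [zero_div, smul_eq_mul]
    have hπ : Real.sqrt Real.pi ≠ 0 := ne_of_gt (Real.sqrt_pos.mpr Real.pi_pos)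
    rw [Real.sqrt_mul (by norm_num : (0:ℝ) ≤ 2)]
    field_simp
  have : ∫ x in Iic c, Real.exp (-x ^ 2 / 2)
      = Real.sqrt (2 * Real.pi) / 2 + Real.sqrt (2 * Real.pi) / 2 * erf (c / Real.sqrt 2) := by
    linarith
  rw [this]; ring

lemma integral_Ioi_gauss (c : ℝ) :
    ∫ x in Ioi c, Real.exp (-x ^ 2 / 2)
      = Real.sqrt (2 * Real.pi) / 2 * (1 - erf (c / Real.sqrt 2)) := by
  have htot := intervalIntegral.integral_Iic_add_Ioi (b := c)
    integrable_gauss.integrableOn integrable_gauss.integrableOn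
  rw [integral_gauss_total, integral_Iic_gauss] at htot
  linarith

lemma tendsto_gauss_atBot : Tendsto (fun x : ℝ => -Real.exp (-x ^ 2 / 2)) atBot (nhds 0) := by
  have h1 : Tendsto (fun x : ℝ => x ^ 2) atBot atTop := by
    have h := (tendsto_pow_atTop (α := ℝ) (n := 2) (by norm_num)).comp
      (tendsto_abs_atBot_atTop (G := ℝ))
    simpa [Function.comp_def, sq_abs] using h
  have h2 : Tendsto (fun x : ℝ => -x ^ 2 / 2) atBot atBot := by
    apply Tendsto.atBot_div_const (by norm_num : (0:ℝ) < 2)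
    exact tendsto_neg_atTop_atBot.comp h1
  have h3 := Real.tendsto_exp_atBot.comp h2
  simpa using h3.neg

lemma tendsto_gauss_atTop : Tendsto (fun x : ℝ => -Real.exp (-x ^ 2 / 2)) atTop (nhds 0) := by
  have h1 : Tendsto (fun x : ℝ => x ^ 2) atTop atTop := tendsto_pow_atTop (α := ℝ) (by norm_num)
  have h2 : Tendsto (fun x : ℝ => -x ^ 2 / 2) atTop atBot := by
    apply Tendsto.atBot_div_const (by norm_num : (0:ℝ) < 2)
    exact tendsto_neg_atTop_atBot.comp h1
  have h3 := Real.tendsto_exp_atBot.comp h2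
  simpa using h3.neg

lemma hasDeriv_gauss (x : ℝ) :
    HasDerivAt (fun x : ℝ => -Real.exp (-x ^ 2 / 2)) (x * Real.exp (-x ^ 2 / 2)) x := by
  have h : HasDerivAt (fun x : ℝ => -x ^ 2 / 2) (-x) x := by
    have := ((hasDerivAt_pow 2 x).neg.div_const 2)
    refine this.congr_deriv ?_
    simp; ring
  have := (h.exp).neg
  refine this.congr_deriv ?_
  ring

lemma integral_Iic_x_gauss (c : ℝ) :
    ∫ x in Iic c, x * Real.exp (-x ^ 2 / 2) = -Real.exp (-c ^ 2 / 2) := by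
  have h := integral_Iic_of_hasDerivAt_of_tendsto' (a := c)
    (f := fun x : ℝ => -Real.exp (-x ^ 2 / 2)) (f' := fun x => x * Real.exp (-x ^ 2 / 2))
    (fun x _ => hasDeriv_gauss x) integrable_x_gauss.integrableOn tendsto_gauss_atBot
  simpa using h

lemma integral_Ioi_x_gauss (c : ℝ) :
    ∫ x in Ioi c, x * Real.exp (-x ^ 2 / 2) = Real.exp (-c ^ 2 / 2) := by
  have h := integral_Ioi_of_hasDerivAt_of_tendsto' (a := c)
    (f := fun x : ℝ => -Real.exp (-x ^ 2 / 2)) (f' := fun x => x * Real.exp (-x ^ 2 / 2))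
    (fun x _ => hasDeriv_gauss x) integrable_x_gauss.integrableOn tendsto_gauss_atTop
  simpa using h

lemma erfc_pos (z : ℝ) : 0 < erfc z := by
  have hpos : 0 < ∫ x in Ioi (z * Real.sqrt 2), Real.exp (-x ^ 2 / 2) := by
    refine (setIntegral_pos_iff_support_of_nonneg_ae ?_ ?_).mpr ?_
    · exact Filter.Eventually.of_forall fun x => (Real.exp_pos _).le
    · exact integrable_gauss.integrableOn
    · have : Function.support (fun x : ℝ => Real.exp (-x ^ 2 / 2)) = Set.univ := by
        ext x; simp [Real.exp_ne_zero]
      rw [this, Set.univ_inter]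
      simp [Real.volume_Ioi]
  rw [integral_Ioi_gauss] at hpos
  have h2 : z * Real.sqrt 2 / Real.sqrt 2 = z := by
    field_simp
  rw [h2] at hpos
  have hs : 0 < Real.sqrt (2 * Real.pi) / 2 := by
    have := Real.sqrt_pos.mpr (by positivity : (0:ℝ) < 2 * Real.pi)
    linarith
  unfold erfc
  nlinarith

lemma gauss_shift_Iic (c d : ℝ) :
    ∫ x in Iic c, Real.exp (-(x + d) ^ 2 / 2)
      = Real.sqrt (2 * Real.pi) / 2 * (1 + erf ((c + d) / Real.sqrt 2)) := by
  have h := setIntegral_Iic_add (fun u => Real.exp (-u ^ 2 / 2)) c d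
  rw [h, integral_Iic_gauss]

lemma gauss_shift_Ioi (c d : ℝ) :
    ∫ x in Ioi c, Real.exp (-(x + d) ^ 2 / 2)
      = Real.sqrt (2 * Real.pi) / 2 * (1 - erf ((c + d) / Real.sqrt 2)) := by
  have h := setIntegral_Ioi_add (fun u => Real.exp (-u ^ 2 / 2)) c d
  rw [h, integral_Ioi_gauss]

lemma integrable_x_gauss_shift (d : ℝ) :
    Integrable (fun x : ℝ => x * Real.exp (-(x + d) ^ 2 / 2)) := by
  have hf : Integrable (fun u : ℝ => (u - d) * Real.exp (-u ^ 2 / 2)) := by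
    have h := integrable_x_gauss.sub (integrable_gauss.const_mul d)
    have e : (fun u : ℝ => (u - d) * Real.exp (-u ^ 2 / 2))
        = fun u : ℝ => u * Real.exp (-u ^ 2 / 2) - d * Real.exp (-u ^ 2 / 2) := by
      funext u; ring
    rw [e]; exact h
  have h := hf.comp_add_right d
  simpa using h

lemma gauss_shift_moment_Iic (c d : ℝ) :
    ∫ x in Iic c, x * Real.exp (-(x + d) ^ 2 / 2)
      = -Real.exp (-(c + d) ^ 2 / 2)
        - d * (Real.sqrt (2 * Real.pi) / 2 * (1 + erf ((c + d) / Real.sqrt 2))) := by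
  have hI1 : IntegrableOn (fun x : ℝ => (x + d) * Real.exp (-(x + d) ^ 2 / 2)) (Iic c) :=
    (integrable_x_gauss.comp_add_right d).integrableOn
  have hI2 : IntegrableOn (fun x : ℝ => d * Real.exp (-(x + d) ^ 2 / 2)) (Iic c) :=
    ((integrable_gauss.comp_add_right d).const_mul d).integrableOn
  have hsplit : ∫ x in Iic c, x * Real.exp (-(x + d) ^ 2 / 2)
      = (∫ x in Iic c, (x + d) * Real.exp (-(x + d) ^ 2 / 2))
        - ∫ x in Iic c, d * Real.exp (-(x + d) ^ 2 / 2) := by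
    rw [← integral_sub hI1 hI2]
    refine integral_congr_ae (Filter.Eventually.of_forall fun x => ?_)
    ring
  rw [hsplit, setIntegral_Iic_add (fun u => u * Real.exp (-u ^ 2 / 2)) c d,
    integral_Iic_x_gauss, integral_const_mul, gauss_shift_Iic]

lemma gauss_shift_moment_Ioi (c d : ℝ) :
    ∫ x in Ioi c, x * Real.exp (-(x + d) ^ 2 / 2)
      = Real.exp (-(c + d) ^ 2 / 2)
        - d * (Real.sqrt (2 * Real.pi) / 2 * (1 - erf ((c + d) / Real.sqrt 2))) := by
  have hI1 : IntegrableOn (fun x : ℝ => (x + d) * Real.exp (-(x + d) ^ 2 / 2)) (Ioi c) :=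
    (integrable_x_gauss.comp_add_right d).integrableOn
  have hI2 : IntegrableOn (fun x : ℝ => d * Real.exp (-(x + d) ^ 2 / 2)) (Ioi c) :=
    ((integrable_gauss.comp_add_right d).const_mul d).integrableOn
  have hsplit : ∫ x in Ioi c, x * Real.exp (-(x + d) ^ 2 / 2)
      = (∫ x in Ioi c, (x + d) * Real.exp (-(x + d) ^ 2 / 2))
        - ∫ x in Ioi c, d * Real.exp (-(x + d) ^ 2 / 2) := by
    rw [← integral_sub hI1 hI2]
    refine integral_congr_ae (Filter.Eventually.of_forall fun x => ?_)
    ring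
  rw [hsplit, setIntegral_Ioi_add (fun u => u * Real.exp (-u ^ 2 / 2)) c d,
    integral_Ioi_x_gauss, integral_const_mul, gauss_shift_Ioi]

/-- closed-form expected neighbor feature in the CSBM-X analysis:
the mean of the density `p(x) = φ(x) e^{-τ|a-x|} / Z(a,τ)`, where
`Z(a,τ) = ∫ φ(x) e^{-τ|a-x|} dx`, equals
`τ (erfc((τ-a)/√2) - e^{2τa} erfc((τ+a)/√2)) / (erfc((τ-a)/√2) + e^{2τa} erfc((τ+a)/√2))`. -/
theorem expected_neighbor_feature_closed_form (a τ : ℝ) :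
    (∫ x : ℝ, x * (phi x * Real.exp (-τ * |a - x|) /
        ∫ y : ℝ, phi y * Real.exp (-τ * |a - y|))) =
      τ * (erfc ((τ - a) / Real.sqrt 2) -
            Real.exp (2 * τ * a) * erfc ((τ + a) / Real.sqrt 2)) /
        (erfc ((τ - a) / Real.sqrt 2) +
          Real.exp (2 * τ * a) * erfc ((τ + a) / Real.sqrt 2)) := by
  have h2π : (0:ℝ) < Real.sqrt (2 * Real.pi) := Real.sqrt_pos.mpr (by positivity)
  have hE1pos := erfc_pos ((τ - a) / Real.sqrt 2)
  have hE2pos := erfc_pos ((τ + a) / Real.sqrt 2)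
  -- pointwise identities
  have hIic : EqOn (fun x => phi x * Real.exp (-τ * |a - x|))
      (fun x => ((Real.sqrt (2 * Real.pi))⁻¹ * Real.exp (τ ^ 2 / 2 - τ * a))
        * Real.exp (-(x + -τ) ^ 2 / 2)) (Iic a) := by
    intro x hx
    have hab : |a - x| = a - x := abs_of_nonneg (by simp only [mem_Iic] at hx; linarith)
    simp only [phi, hab]
    rw [mul_assoc, ← Real.exp_add, mul_assoc, ← Real.exp_add]
    congr 2
    ring
  have hIoi : EqOn (fun x => phi x * Real.exp (-τ * |a - x|))
      (fun x => ((Real.sqrt (2 * Real.pi))⁻¹ * Real.exp (τ ^ 2 / 2 + τ * a))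
        * Real.exp (-(x + τ) ^ 2 / 2)) (Ioi a) := by
    intro x hx
    have hab : |a - x| = x - a := by
      rw [abs_of_nonpos (by simp only [mem_Ioi] at hx; linarith)]; ring
    simp only [phi, hab]
    rw [mul_assoc, ← Real.exp_add, mul_assoc, ← Real.exp_add]
    congr 2
    ring
  have hxIic : EqOn (fun x => x * (phi x * Real.exp (-τ * |a - x|)))
      (fun x => ((Real.sqrt (2 * Real.pi))⁻¹ * Real.exp (τ ^ 2 / 2 - τ * a))
        * (x * Real.exp (-(x + -τ) ^ 2 / 2))) (Iic a) := by
    intro x hx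
    have h := hIic hx
    simp only at h ⊢
    rw [h]
    ring
  have hxIoi : EqOn (fun x => x * (phi x * Real.exp (-τ * |a - x|)))
      (fun x => ((Real.sqrt (2 * Real.pi))⁻¹ * Real.exp (τ ^ 2 / 2 + τ * a))
        * (x * Real.exp (-(x + τ) ^ 2 / 2))) (Ioi a) := by
    intro x hx
    have h := hIoi hx
    simp only at h ⊢
    rw [h]
    ring
  -- integrability
  have hIntIic : IntegrableOn (fun x => phi x * Real.exp (-τ * |a - x|)) (Iic a) :=
    IntegrableOn.congr_fun
      (((integrable_gauss.comp_add_right (-τ)).const_mul _).integrableOn) hIic.symm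
      measurableSet_Iic
  have hIntIoi : IntegrableOn (fun x => phi x * Real.exp (-τ * |a - x|)) (Ioi a) :=
    IntegrableOn.congr_fun
      (((integrable_gauss.comp_add_right τ).const_mul _).integrableOn) hIoi.symm
      measurableSet_Ioi
  have hIntxIic : IntegrableOn (fun x => x * (phi x * Real.exp (-τ * |a - x|))) (Iic a) :=
    IntegrableOn.congr_fun
      (((integrable_x_gauss_shift (-τ)).const_mul _).integrableOn) hxIic.symm
      measurableSet_Iic
  have hIntxIoi : IntegrableOn (fun x => x * (phi x * Real.exp (-τ * |a - x|))) (Ioi a) :=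
    IntegrableOn.congr_fun
      (((integrable_x_gauss_shift τ).const_mul _).integrableOn) hxIoi.symm
      measurableSet_Ioi
  -- helpful identities
  have hk1 : (Real.sqrt (2 * Real.pi))⁻¹ * Real.sqrt (2 * Real.pi) = 1 :=
    inv_mul_cancel₀ (ne_of_gt h2π)
  have e1 : (a + -τ) / Real.sqrt 2 = -((τ - a) / Real.sqrt 2) := by ring
  have e2 : (a + τ) / Real.sqrt 2 = (τ + a) / Real.sqrt 2 := by ring
  have hex : Real.exp (τ ^ 2 / 2 + τ * a)
      = Real.exp (τ ^ 2 / 2 - τ * a) * Real.exp (2 * τ * a) := by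
    rw [← Real.exp_add]; congr 1; ring
  have hcancel : Real.exp (τ ^ 2 / 2 - τ * a) * Real.exp (-(a + -τ) ^ 2 / 2)
      = Real.exp (τ ^ 2 / 2 + τ * a) * Real.exp (-(a + τ) ^ 2 / 2) := by
    rw [← Real.exp_add, ← Real.exp_add]; congr 1; ring
  -- the normalizing constant
  have hZ : (∫ y : ℝ, phi y * Real.exp (-τ * |a - y|))
      = Real.exp (τ ^ 2 / 2 - τ * a) / 2
        * (erfc ((τ - a) / Real.sqrt 2)
          + Real.exp (2 * τ * a) * erfc ((τ + a) / Real.sqrt 2)) := by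
    rw [← intervalIntegral.integral_Iic_add_Ioi hIntIic hIntIoi,
      setIntegral_congr_fun measurableSet_Iic hIic,
      setIntegral_congr_fun measurableSet_Ioi hIoi,
      integral_const_mul, integral_const_mul, gauss_shift_Iic, gauss_shift_Ioi,
      e1, erf_neg, e2, hex]
    simp only [erfc]
    field_simp
    ring
  -- the numerator
  have hN : (∫ x : ℝ, x * (phi x * Real.exp (-τ * |a - x|)))
      = Real.exp (τ ^ 2 / 2 - τ * a) / 2
        * (τ * (erfc ((τ - a) / Real.sqrt 2)
          - Real.exp (2 * τ * a) * erfc ((τ + a) / Real.sqrt 2))) := by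
    rw [← intervalIntegral.integral_Iic_add_Ioi hIntxIic hIntxIoi,
      setIntegral_congr_fun measurableSet_Iic hxIic,
      setIntegral_congr_fun measurableSet_Ioi hxIoi,
      integral_const_mul, integral_const_mul, gauss_shift_moment_Iic, gauss_shift_moment_Ioi,
      e1, erf_neg, e2]
    simp only [erfc]
    rw [hex] at hcancel ⊢
    linear_combination (-(Real.sqrt (2 * Real.pi))⁻¹) * hcancel
      + (τ / 2 * (Real.exp (τ ^ 2 / 2 - τ * a) * (1 - erf ((τ - a) / Real.sqrt 2))
          - Real.exp (τ ^ 2 / 2 - τ * a) * Real.exp (2 * τ * a)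
            * (1 - erf ((τ + a) / Real.sqrt 2)))) * hk1
  -- put it together
  have hrw : (fun x : ℝ => x * (phi x * Real.exp (-τ * |a - x|) /
        ∫ y : ℝ, phi y * Real.exp (-τ * |a - y|)))
      = fun x : ℝ => (x * (phi x * Real.exp (-τ * |a - x|)))
          * (∫ y : ℝ, phi y * Real.exp (-τ * |a - y|))⁻¹ := by
    funext x; rw [div_eq_mul_inv]; ring
  rw [hrw, integral_mul_const, hN, hZ]
  have hC : (0:ℝ) < Real.exp (τ ^ 2 / 2 - τ * a) := Real.exp_pos _
  have hD : (0:ℝ) < erfc ((τ - a) / Real.sqrt 2)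
      + Real.exp (2 * τ * a) * erfc ((τ + a) / Real.sqrt 2) :=
    add_pos hE1pos (mul_pos (Real.exp_pos _) hE2pos)
  field_simp
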